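/- Let L be a symmetric Leibniz ring. Then the right center ζ^right(L) = {x : [y,x]=0 for all y} is an ideal of L, and moreover [ζ^right(L), L] ≤ ζ(L), where ζ(L) = {x : [x,y]=[y,x]=0 for all y} is the center; hence ζ^right(L)/ζ(L) ≤ ζ(L/ζ(L)). -/

import Mathlib

/-- In a symmetric Leibniz ring `L`, the right center `ζ^right(L)` is an ideal of `L`
and `[ζ^right(L), L] ≤ ζ(L)` (and `[L, ζ^right(L)] ≤ ζ(L)`), whence
`ζ^right(L)/ζ(L) ≤ ζ(L/ζ(L))`. -/
theorem rightCenter_isIdeal_symmetric {L : Type*} [AddCommGroup L] (br : L → L → L)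
    (hadd_left : ∀ a b c : L, br (a + b) c = br a c + br b c)
    (hadd_right : ∀ a b c : L, br a (b + c) = br a b + br a c)
    (hleib : ∀ a b c : L, br a (br b c) = br (br a b) c + br b (br a c))
    (hright : ∀ a b c : L, br a (br b c) = br (br a b) c - br (br a c) b) :
    let Zr : Set L := {x | ∀ y : L, br y x = 0}
    let Z : Set L := {x | ∀ y : L, br x y = 0 ∧ br y x = 0}
    (0 : L) ∈ Zr ∧ (∀ a ∈ Zr, ∀ b ∈ Zr, a - b ∈ Zr) ∧
    (∀ a ∈ Zr, ∀ y : L, br a y ∈ Zr ∧ br y a ∈ Zr) ∧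
    (∀ a ∈ Zr, ∀ y : L, br a y ∈ Z ∧ br y a ∈ Z) := by
  intro Zr Z
  -- bracket with 0 on the right is 0
  have h0 : ∀ y : L, br y (0 : L) = 0 := by
    intro y
    have h := hadd_right y 0 0
    simp only [add_zero] at h
    exact (left_eq_add.mp h)
  have h0l : ∀ y : L, br (0 : L) y = 0 := by
    intro y
    have h := hadd_left 0 0 y
    simp only [add_zero] at h
    exact (left_eq_add.mp h)
  -- antisymmetry on bracket elements: br b (br a c) = - br (br a c) b
  have hanti : ∀ a b c : L, br b (br a c) = - br (br a c) b := by
    intro a b c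
    have h1 := hleib a b c
    have h2 := hright a b c
    rw [h1, sub_eq_add_neg, add_right_inj] at h2
    exact h2
  -- key: for a ∈ Zr, br (br a z) y = 0 for all z y
  have hkey : ∀ a, a ∈ Zr → ∀ z y : L, br (br a z) y = 0 := by
    intro a ha z y
    have e1 : br z (br a y) = br a (br z y) := by
      have h := hleib z a y
      rw [ha z, h0l, zero_add] at h
      exact h
    have e2 := hleib a z y
    rw [← e1] at e2
    -- e2 : br z (br a y) = br (br a z) y + br z (br a y)
    have := right_eq_add.mp e2
    exact this
  have hmem : ∀ a, a ∈ Zr → ∀ y : L, br a y ∈ Z := by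
    intro a ha y z
    refine ⟨hkey a ha y z, ?_⟩
    rw [hanti a z y, hkey a ha y z, neg_zero]
  refine ⟨h0, ?_, ?_, ?_⟩
  · intro a ha b hb y
    have h := hadd_right y (a - b) b
    rw [sub_add_cancel, ha y, hb y, add_zero] at h
    exact h.symm
  · intro a ha y
    exact ⟨fun z => (hmem a ha y z).2, fun z => by rw [ha y]; exact h0 z⟩
  · intro a ha y
    exact ⟨hmem a ha y, fun z => by rw [ha y]; exact ⟨h0l z, h0 z⟩⟩
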